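/- Let ℓ ≥ 2 and let r satisfy 0 ≤ r < 2^ℓ. Then Δ₀(2^ℓ + r) = Δ₀(r) + 2 if r ≤ 2^{ℓ−1}, and Δ₀(2^ℓ + r) = Δ₀(2^{ℓ+1} − r) if r > 2^{ℓ−1}. Moreover, m₀(2^ℓ + r) ≡ m₀(r) (mod 2) if r ≤ 2^{ℓ−1}, and m₀(2^ℓ + r) ≡ m₀(2^{ℓ+1} − r) + Δ₀(2^{ℓ+1} − r) (mod 2) if r > 2^{ℓ−1}. -/
import Mathlib


/-- The 2-kernel of a sequence `s : ℕ → ℤ`. -/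
def kernel2 (s : ℕ → ℤ) : Set (ℕ → ℤ) :=
  {t | ∃ i j : ℕ, j < 2 ^ i ∧ t = fun n => s (2 ^ i * n + j)}

/-- A sequence is 2-regular if the ℤ-module spanned by its 2-kernel is finitely generated. -/
def IsTwoRegular (s : ℕ → ℤ) : Prop :=
  (Submodule.span ℤ (kernel2 s)).FG

/-- A sequence is 2-automatic if its 2-kernel is finite. -/
def IsTwoAutomatic (s : ℕ → ℤ) : Prop :=
  (kernel2 s).Finite

/-- The period-doubling word, fixed point (starting with 0) of 0 ↦ 01, 1 ↦ 00:
its `n`-th letter is the parity of the 2-adic valuation of `n+1`. -/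
def pd (n : ℕ) : ℕ := (n + 1).factorization 2 % 2

/-- The Thue–Morse word, fixed point (starting with 0) of 0 ↦ 01, 1 ↦ 10:
its `n`-th letter is the parity of the binary digit sum of `n`. -/
def tm (n : ℕ) : ℕ := (Nat.digits 2 n).sum % 2

/-- The 2-block coding `x = block(p, 2)` of the period-doubling word. -/
def xw (n : ℕ) : ℕ := 2 * pd n + pd (n + 1)

/-- The 2-block coding `y = block(t, 2)` of the Thue–Morse word. -/
def yw (n : ℕ) : ℕ := 2 * tm n + tm (n + 1)

/-- The factor of an infinite word `w` of length `len` occurring at position `i`. -/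
def factorAt (w : ℕ → ℕ) (i len : ℕ) : List ℕ :=
  (List.range len).map fun k => w (i + k)

/-- `u` is a factor of the infinite word `w`. -/
def IsFactor (w : ℕ → ℕ) (u : List ℕ) : Prop :=
  ∃ i, u = factorAt w i u.length

/-- Maximal number of 0's in a factor of `x` of length `n`. -/
noncomputable def M0 (n : ℕ) : ℕ := sSup {k | ∃ i, (factorAt xw i n).count 0 = k}

/-- Minimal number of 0's in a factor of `x` of length `n`. -/
noncomputable def m0 (n : ℕ) : ℕ := sInf {k | ∃ i, (factorAt xw i n).count 0 = k}

noncomputable def D0 (n : ℕ) : ℕ := M0 n - m0 n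

/-- Maximal number of 2's in a factor of `x` of length `n`. -/
noncomputable def M2c (n : ℕ) : ℕ := sSup {k | ∃ i, (factorAt xw i n).count 2 = k}

/-- Minimal number of 2's in a factor of `x` of length `n`. -/
noncomputable def m2c (n : ℕ) : ℕ := sInf {k | ∃ i, (factorAt xw i n).count 2 = k}

/-- The max-jump function for `M0`. -/
noncomputable def JM0 : ℕ → ℕ
  | 0 => 0
  | n + 1 => if M0 n < M0 (n + 1) then 1 else 0

/-- The min-jump function for `m0`. -/
noncomputable def jm0 (n : ℕ) : ℕ := if m0 n < m0 (n + 1) then 1 else 0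

/-- Maximal total number of 1's and 2's in a factor of `y` of length `n`. -/
noncomputable def M12 (n : ℕ) : ℕ :=
  sSup {k | ∃ i, (factorAt yw i n).count 1 + (factorAt yw i n).count 2 = k}

/-- Minimal total number of 1's and 2's in a factor of `y` of length `n`. -/
noncomputable def m12 (n : ℕ) : ℕ :=
  sInf {k | ∃ i, (factorAt yw i n).count 1 + (factorAt yw i n).count 2 = k}

noncomputable def D12 (n : ℕ) : ℕ := M12 n - m12 n

/-- Maximal total number of 0's and 3's in a factor of `y` of length `n`. -/
noncomputable def M03 (n : ℕ) : ℕ :=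
  sSup {k | ∃ i, (factorAt yw i n).count 0 + (factorAt yw i n).count 3 = k}

/-- Minimal total number of 0's and 3's in a factor of `y` of length `n`. -/
noncomputable def m03 (n : ℕ) : ℕ :=
  sInf {k | ∃ i, (factorAt yw i n).count 0 + (factorAt yw i n).count 3 = k}

/-- The max-jump function for `M03`. -/
noncomputable def JM03 (n : ℕ) : ℕ := if M03 (n - 1) < M03 n then 1 else 0

/-- The min-jump function for `m03`. -/
noncomputable def jm03 (n : ℕ) : ℕ := if m03 n < m03 (n + 1) then 1 else 0

/-- Abelian complexity: the number of abelian equivalence classes (i.e. distinct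
multisets of letters) of factors of `w` of length `n`. -/
noncomputable def abComplexity (w : ℕ → ℕ) (n : ℕ) : ℕ :=
  Set.ncard {m : Multiset ℕ | ∃ i, (↑(factorAt w i n) : Multiset ℕ) = m}

/-- The number of occurrences of `v` as a factor of `u`. -/
def countFactor (u v : List ℕ) : ℕ :=
  ((List.range (u.length + 1 - v.length)).filter
    fun i => decide ((u.drop i).take v.length = v)).length

/-- 2-abelian complexity: the number of 2-abelian equivalence classes of factors of `w`
of length `n`, where two words are 2-abelian equivalent when every word of length at most 2
occurs equally often in both. -/
noncomputable def abel2Complexity (w : ℕ → ℕ) (n : ℕ) : ℕ :=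
  Set.ncard {f : List ℕ → ℕ |
    ∃ i, f = fun v => if v.length ≤ 2 then countFactor (factorAt w i n) v else 0}

/-- The morphism φ : 0 ↦ 12, 1 ↦ 12, 2 ↦ 00. -/
def phiL : ℕ → List ℕ
  | 0 => [1, 2]
  | 1 => [1, 2]
  | 2 => [0, 0]
  | _ => []

/-- The morphism τ : 0 ↦ 0, 1 ↦ 2, 2 ↦ 1. -/
def tauL : ℕ → ℕ
  | 1 => 2
  | 2 => 1
  | n => n



-- ===== auxiliary development =====

lemma pd_le_one (n : ℕ) : pd n ≤ 1 := by
  have := Nat.mod_two_eq_zero_or_one ((n+1).factorization 2)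
  unfold pd; omega

lemma pd_two_mul (n : ℕ) : pd (2*n) = 0 := by
  unfold pd
  have h : (2*n+1).factorization 2 = 0 :=
    Nat.factorization_eq_zero_of_not_dvd (by omega)
  simp [h]

lemma pd_odd (n : ℕ) : pd (2*n+1) + pd n = 1 := by
  unfold pd
  have h1 : (2*n+1+1) = 2 * (n+1) := by ring
  rw [h1, Nat.factorization_mul two_ne_zero (Nat.succ_ne_zero n)]
  have h2 : (Nat.factorization 2) 2 = 1 := by
    simp [Nat.Prime.factorization Nat.prime_two]
  simp only [Finsupp.add_apply, h2, Nat.succ_eq_add_one]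
  omega

lemma pd_zero : pd 0 = 0 := by unfold pd; simp
lemma pd_one : pd 1 = 1 := by
  unfold pd
  have : (Nat.factorization 2) 2 = 1 := by simp [Nat.Prime.factorization Nat.prime_two]
  simp [this]

def Gc (m : ℕ) : ℕ := ∑ k ∈ Finset.range m, pd k

lemma Gc_succ (m : ℕ) : Gc (m+1) = Gc m + pd m := Finset.sum_range_succ _ _

lemma Gc_zero : Gc 0 = 0 := rfl

lemma Gc_double (m : ℕ) : Gc (2*m) + Gc m = m := by
  induction m with
  | zero => simp [Gc]
  | succ k ih =>
    have h1 : 2*(k+1) = (2*k+1)+1 := by ring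
    rw [h1, Gc_succ, Gc_succ, Gc_succ, pd_two_mul]
    have := pd_odd k
    omega

lemma Gc_odd (m : ℕ) : Gc (2*m+1) = Gc (2*m) := by
  rw [Gc_succ, pd_two_mul]; omega

lemma Gc_half (k : ℕ) : Gc k + Gc (k/2) = k/2 := by
  obtain ⟨m, rfl | rfl⟩ := Nat.even_or_odd' k
  · have h : 2*m/2 = m := by omega
    rw [h]; exact Gc_double m
  · have h : (2*m+1)/2 = m := by omega
    rw [h, Gc_odd]; exact Gc_double m

lemma Gc_window_le (i n : ℕ) : Gc (i+n) ≤ Gc i + n := by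
  induction n with
  | zero => simp
  | succ k ih =>
    have h : i + (k+1) = (i+k)+1 := by ring
    rw [h, Gc_succ]
    have := pd_le_one (i+k)
    omega

lemma Gc_mono (i n : ℕ) : Gc i ≤ Gc (i+n) := by
  induction n with
  | zero => simp
  | succ k ih =>
    have h : i + (k+1) = (i+k)+1 := by ring
    rw [h, Gc_succ]; omega

def SG (n : ℕ) : Set ℕ := {k | ∃ i, Gc (i+n) = Gc i + k}

noncomputable def m2x (n : ℕ) : ℕ := sInf (SG n)
noncomputable def M2x (n : ℕ) : ℕ := sSup (SG n)

lemma SG_window (i n : ℕ) : ∃ k, Gc (i+n) = Gc i + k ∧ k ∈ SG n := by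
  obtain ⟨k, hk⟩ := Nat.le.dest (Gc_mono i n)
  exact ⟨k, hk.symm, ⟨i, hk.symm⟩⟩

lemma SG_nonempty (n : ℕ) : (SG n).Nonempty := by
  obtain ⟨k, _, hk⟩ := SG_window 0 n
  exact ⟨k, hk⟩

lemma SG_bdd (n : ℕ) : BddAbove (SG n) := by
  refine ⟨n, fun k hk => ?_⟩
  obtain ⟨i, hi⟩ := hk
  have := Gc_window_le i n
  omega

lemma M2x_spec (i n : ℕ) : Gc (i+n) ≤ Gc i + M2x n := by
  obtain ⟨k, hk, hmem⟩ := SG_window i n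
  have : k ≤ M2x n := le_csSup (SG_bdd n) hmem
  omega

lemma m2x_spec (i n : ℕ) : Gc i + m2x n ≤ Gc (i+n) := by
  obtain ⟨k, hk, hmem⟩ := SG_window i n
  have : m2x n ≤ k := Nat.sInf_le hmem
  omega

lemma M2x_wit (n : ℕ) : ∃ i, Gc (i+n) = Gc i + M2x n :=
  Nat.sSup_mem (SG_nonempty n) (SG_bdd n)

lemma m2x_wit (n : ℕ) : ∃ i, Gc (i+n) = Gc i + m2x n :=
  Nat.sInf_mem (SG_nonempty n)

lemma m2x_le_M2x (n : ℕ) : m2x n ≤ M2x n := by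
  obtain ⟨i, hi⟩ := M2x_wit n
  have := m2x_spec i n
  omega

lemma M2x_le (n : ℕ) : M2x n ≤ n := by
  obtain ⟨i, hi⟩ := M2x_wit n
  have := Gc_window_le i n
  omega

lemma M2x_mono_succ (n : ℕ) : M2x n ≤ M2x (n+1) := by
  obtain ⟨i, hi⟩ := M2x_wit n
  have h1 : Gc (i+n) ≤ Gc (i+(n+1)) := by
    have : i + (n+1) = (i+n)+1 := by ring
    rw [this, Gc_succ]; omega
  have := M2x_spec i (n+1)
  omega

lemma M2x_step (n : ℕ) : M2x (n+1) ≤ M2x n + 1 := by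
  obtain ⟨i, hi⟩ := M2x_wit (n+1)
  have h1 : i + (n+1) = (i+n)+1 := by ring
  rw [h1, Gc_succ] at hi
  have h2 := pd_le_one (i+n)
  have := M2x_spec i n
  omega

lemma m2x_mono_succ (n : ℕ) : m2x n ≤ m2x (n+1) := by
  obtain ⟨i, hi⟩ := m2x_wit (n+1)
  have h1 : i + (n+1) = (i+n)+1 := by ring
  rw [h1, Gc_succ] at hi
  have := m2x_spec i n
  omega

lemma m2x_step (n : ℕ) : m2x (n+1) ≤ m2x n + 1 := by
  obtain ⟨i, hi⟩ := m2x_wit n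
  have h1 : Gc (i+(n+1)) ≤ Gc (i+n) + 1 := by
    have h : i + (n+1) = (i+n)+1 := by ring
    rw [h, Gc_succ]
    have := pd_le_one (i+n); omega
  have := m2x_spec i (n+1)
  omega

-- values at 0 and 1
lemma m2x_zero : m2x 0 = 0 := by
  have h := m2x_spec 0 0
  simp at h
  omega

lemma M2x_zero : M2x 0 = 0 := by
  obtain ⟨i, hi⟩ := M2x_wit 0
  rw [Nat.add_zero] at hi
  omega

lemma m2x_one : m2x 1 = 0 := by
  have h : Gc (0+1) = Gc 0 + 0 := by
    rw [Gc_succ, pd_zero]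
  have hm : (0:ℕ) ∈ SG 1 := ⟨0, h⟩
  have h2 : m2x 1 ≤ 0 := Nat.sInf_le hm
  omega

lemma M2x_one : M2x 1 = 1 := by
  have h : Gc (1+1) = Gc 1 + 1 := by
    rw [Gc_succ, pd_one]
  have h1 : (1:ℕ) ∈ SG 1 := ⟨1, h⟩
  have h2 : 1 ≤ M2x 1 := le_csSup (SG_bdd 1) h1
  have h3 := M2x_le 1
  omega

-- The four recursions
lemma R1 (m : ℕ) : m2x (2*m) + M2x m = m := by
  -- ≤ : witness for M2x m, doubled position
  obtain ⟨i, hi⟩ := M2x_wit m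
  have e1 : Gc (2*i + 2*m) + Gc (i+m) = i+m := by
    have h : 2*i+2*m = 2*(i+m) := by ring
    have := Gc_half (2*(i+m))
    have hd : 2*(i+m)/2 = i+m := by omega
    rw [hd] at this
    rw [h]; exact this
  have e2 : Gc (2*i) + Gc i = i := by
    have := Gc_half (2*i)
    have hd : 2*i/2 = i := by omega
    rw [hd] at this; exact this
  obtain ⟨k, hk, hmem⟩ := SG_window (2*i) (2*m)
  have hle : m2x (2*m) ≤ k := Nat.sInf_le hmem
  -- ≥ : arbitrary witness for m2x (2m)
  obtain ⟨j, hj⟩ := m2x_wit (2*m)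
  have f1 : Gc (j + 2*m) + Gc (j/2 + m) = j/2 + m := by
    have := Gc_half (j + 2*m)
    have hd : (j+2*m)/2 = j/2 + m := by omega
    rw [hd] at this; exact this
  have f2 : Gc j + Gc (j/2) = j/2 := Gc_half j
  have f3 := M2x_spec (j/2) m
  omega

lemma R2 (m : ℕ) : M2x (2*m) + m2x m = m := by
  obtain ⟨i, hi⟩ := m2x_wit m
  have e1 : Gc (2*i + 2*m) + Gc (i+m) = i+m := by
    have h : 2*i+2*m = 2*(i+m) := by ring
    have := Gc_half (2*(i+m))
    have hd : 2*(i+m)/2 = i+m := by omega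
    rw [hd] at this; rw [h]; exact this
  have e2 : Gc (2*i) + Gc i = i := by
    have := Gc_half (2*i); have hd : 2*i/2 = i := by omega
    rw [hd] at this; exact this
  obtain ⟨k, hk, hmem⟩ := SG_window (2*i) (2*m)
  have hle : k ≤ M2x (2*m) := le_csSup (SG_bdd _) hmem
  obtain ⟨j, hj⟩ := M2x_wit (2*m)
  have f1 : Gc (j + 2*m) + Gc (j/2 + m) = j/2 + m := by
    have := Gc_half (j + 2*m)
    have hd : (j+2*m)/2 = j/2 + m := by omega
    rw [hd] at this; exact this
  have f2 : Gc j + Gc (j/2) = j/2 := Gc_half j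
  have f3 := m2x_spec (j/2) m
  omega

lemma R3 (m : ℕ) : m2x (2*m+1) + M2x m = m := by
  obtain ⟨i, hi⟩ := M2x_wit m
  have e1 : Gc (2*i + (2*m+1)) + Gc (i+m) = i+m := by
    have h : 2*i+(2*m+1) = 2*(i+m)+1 := by ring
    rw [h, Gc_odd]
    have := Gc_half (2*(i+m))
    have hd : 2*(i+m)/2 = i+m := by omega
    rw [hd] at this; exact this
  have e2 : Gc (2*i) + Gc i = i := by
    have := Gc_half (2*i); have hd : 2*i/2 = i := by omega
    rw [hd] at this; exact this
  obtain ⟨k, hk, hmem⟩ := SG_window (2*i) (2*m+1)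
  have hle : m2x (2*m+1) ≤ k := Nat.sInf_le hmem
  -- ≥ direction
  obtain ⟨j, hj⟩ := m2x_wit (2*m+1)
  have f1 : Gc (j + (2*m+1)) + Gc ((j+(2*m+1))/2) = (j+(2*m+1))/2 := Gc_half _
  have f2 : Gc j + Gc (j/2) = j/2 := Gc_half j
  have hstep := M2x_step m
  rcases Nat.even_or_odd' j with ⟨a, rfl | rfl⟩
  · have hd : (2*a+(2*m+1))/2 = a + m := by omega
    have hd2 : 2*a/2 = a := by omega
    rw [hd] at f1; rw [hd2] at f2
    have f3 := M2x_spec (a) m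
    omega
  · have hd : (2*a+1+(2*m+1))/2 = a + (m+1) := by omega
    have hd2 : (2*a+1)/2 = a := by omega
    rw [hd] at f1; rw [hd2] at f2
    have f3 := M2x_spec a (m+1)
    omega

lemma R4 (m : ℕ) : M2x (2*m+1) + m2x (m+1) = m+1 := by
  obtain ⟨i, hi⟩ := m2x_wit (m+1)
  have e1 : Gc ((2*i+1) + (2*m+1)) + Gc (i+(m+1)) = i+(m+1) := by
    have h : (2*i+1)+(2*m+1) = 2*(i+(m+1)) := by ring
    rw [h]
    have := Gc_half (2*(i+(m+1)))
    have hd : 2*(i+(m+1))/2 = i+(m+1) := by omega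
    rw [hd] at this; exact this
  have e2 : Gc (2*i+1) + Gc i = i := by
    rw [Gc_odd]
    have := Gc_half (2*i); have hd : 2*i/2 = i := by omega
    rw [hd] at this; exact this
  obtain ⟨k, hk, hmem⟩ := SG_window (2*i+1) (2*m+1)
  have hle : k ≤ M2x (2*m+1) := le_csSup (SG_bdd _) hmem
  obtain ⟨j, hj⟩ := M2x_wit (2*m+1)
  have f1 : Gc (j + (2*m+1)) + Gc ((j+(2*m+1))/2) = (j+(2*m+1))/2 := Gc_half _
  have f2 : Gc j + Gc (j/2) = j/2 := Gc_half j
  have hstep := m2x_step m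
  rcases Nat.even_or_odd' j with ⟨a, rfl | rfl⟩
  · have hd : (2*a+(2*m+1))/2 = a + m := by omega
    have hd2 : 2*a/2 = a := by omega
    rw [hd] at f1; rw [hd2] at f2
    have f3 := m2x_spec a m
    omega
  · have hd : (2*a+1+(2*m+1))/2 = a + (m+1) := by omega
    have hd2 : (2*a+1)/2 = a := by omega
    rw [hd] at f1; rw [hd2] at f2
    have f3 := m2x_spec a (m+1)
    omega

-- unified recursions
lemma mrec (k : ℕ) : m2x k + M2x (k/2) = k/2 := by
  rcases Nat.even_or_odd' k with ⟨m, rfl | rfl⟩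
  · have hd : 2*m/2 = m := by omega
    rw [hd]; exact R1 m
  · have hd : (2*m+1)/2 = m := by omega
    rw [hd]; exact R3 m

lemma Mrec (k : ℕ) : M2x k + m2x ((k+1)/2) = (k+1)/2 := by
  rcases Nat.even_or_odd' k with ⟨m, rfl | rfl⟩
  · have hd : (2*m+1)/2 = m := by omega
    rw [hd]
    have := R2 m; omega
  · have hd : (2*m+1+1)/2 = m+1 := by omega
    rw [hd]; exact R4 m

-- prefix count of zeros of xw
def F0 (N : ℕ) : ℕ := ∑ k ∈ Finset.range N, (if xw k = 0 then 1 else 0)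

lemma F0_succ (N : ℕ) : F0 (N+1) = F0 N + (if xw N = 0 then 1 else 0) :=
  Finset.sum_range_succ _ _

lemma F0_mono (i n : ℕ) : F0 i ≤ F0 (i+n) := by
  induction n with
  | zero => simp
  | succ k ih =>
    have h : i + (k+1) = (i+k)+1 := by ring
    rw [h, F0_succ]; omega

lemma xw_even_ind (a : ℕ) : (if xw (2*a) = 0 then 1 else 0) = pd a := by
  have h1 : xw (2*a) = pd (2*a+1) := by
    unfold xw; rw [pd_two_mul]; ring
  have h2 := pd_odd a
  have h3 := pd_le_one a
  rw [h1]
  have h4 : pd (2*a+1) = 1 - pd a := by omega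
  rcases Nat.le_one_iff_eq_zero_or_eq_one.mp h3 with h | h <;> simp [h4, h]

lemma count_eq_F0 (i n : ℕ) : (factorAt xw i n).count 0 + F0 i = F0 (i+n) := by
  induction n with
  | zero => simp [factorAt, F0]
  | succ k ih =>
    have h1 : factorAt xw i (k+1) = factorAt xw i k ++ [xw (i+k)] := by
      simp [factorAt, List.range_succ]
    have h2 : i + (k+1) = (i+k)+1 := by ring
    rw [h1, h2, F0_succ, List.count_append]
    have h3 : ([xw (i+k)].count 0) = (if xw (i+k) = 0 then 1 else 0) := by
      simp [List.count_singleton']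
    omega

lemma xw_odd_ind (a : ℕ) : (if xw (2*a+1) = 0 then 1 else 0) = pd a := by
  have h0 : xw (2*a+1) = 2 * pd (2*a+1) := by
    unfold xw
    have h : 2*a+1+1 = 2*(a+1) := by ring
    rw [h, pd_two_mul]
    ring
  have h2 := pd_odd a
  have h3 := pd_le_one a
  rw [h0]
  have h4 : pd (2*a+1) = 1 - pd a := by omega
  rcases Nat.le_one_iff_eq_zero_or_eq_one.mp h3 with h | h <;> simp [h4, h]

lemma F0_even (N : ℕ) : F0 (2*N) = 2 * Gc N := by
  induction N with
  | zero => simp [F0, Gc_zero]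
  | succ k ih =>
    have h1 : 2*(k+1) = (2*k+1)+1 := by ring
    rw [h1, F0_succ, F0_succ, Gc_succ, xw_even_ind, xw_odd_ind, ih]
    ring

lemma F0_odd (N : ℕ) : F0 (2*N+1) = 2 * Gc N + pd N := by
  rw [F0_succ, F0_even, xw_even_ind]

-- characterization of the zero-count set
lemma set0_eq (n : ℕ) :
    {k | ∃ i, (factorAt xw i n).count 0 = k} = {k | ∃ i, F0 (i+n) = F0 i + k} := by
  ext k
  constructor
  · rintro ⟨i, hi⟩
    exact ⟨i, by have := count_eq_F0 i n; omega⟩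
  · rintro ⟨i, hi⟩
    exact ⟨i, by have := count_eq_F0 i n; omega⟩

lemma set0_ub (n : ℕ) : ∀ k ∈ {k | ∃ i, F0 (i+n) = F0 i + k},
    k ≤ M2x (n/2) + M2x ((n+1)/2) := by
  rintro k ⟨i, hi⟩
  rcases Nat.even_or_odd' i with ⟨a, rfl | rfl⟩ <;> rcases Nat.even_or_odd' n with ⟨m, rfl | rfl⟩
  · -- i=2a, n=2m
    have h1 : 2*a + 2*m = 2*(a+m) := by ring
    rw [h1, F0_even, F0_even] at hi
    have := M2x_spec a m
    have hd : 2*m/2 = m := by omega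
    have hd2 : (2*m+1)/2 = m := by omega
    rw [hd, hd2]
    omega
  · -- i=2a, n=2m+1
    have h1 : 2*a + (2*m+1) = 2*(a+m)+1 := by ring
    rw [h1, F0_odd, F0_even] at hi
    have b1 := M2x_spec a m
    have b2 := M2x_spec a (m+1)
    have hs : Gc (a+(m+1)) = Gc (a+m) + pd (a+m) := by
      have h : a+(m+1) = (a+m)+1 := by ring
      rw [h, Gc_succ]
    have hd1 : (2*m+1)/2 = m := by omega
    have hd2 : (2*m+1+1)/2 = m+1 := by omega
    rw [hd1, hd2]
    omega
  · -- i=2a+1, n=2m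
    have h1 : 2*a+1 + 2*m = 2*(a+m)+1 := by ring
    rw [h1, F0_odd, F0_odd] at hi
    have b1 := M2x_spec a m
    have b2 := M2x_spec (a+1) m
    have hs : Gc (a+1) = Gc a + pd a := Gc_succ a
    have hs2 : Gc (a+m+1) = Gc (a+m) + pd (a+m) := Gc_succ (a+m)
    have hp1 := pd_le_one a
    have hp2 := pd_le_one (a+m)
    have hre : a+1+m = a+m+1 := by ring
    rw [hre] at b2
    have hd : 2*m/2 = m := by omega
    have hd2 : (2*m+1)/2 = m := by omega
    rw [hd, hd2]
    omega
  · -- i=2a+1, n=2m+1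
    have h1 : 2*a+1 + (2*m+1) = 2*(a+(m+1)) := by ring
    rw [h1, F0_even, F0_odd] at hi
    have b1 := M2x_spec a (m+1)
    have b2 := M2x_spec (a+1) m
    have hs : Gc (a+1) = Gc a + pd a := Gc_succ a
    have hp1 := pd_le_one a
    have hre : a+1+m = a+(m+1) := by ring
    rw [hre] at b2
    have hd1 : (2*m+1)/2 = m := by omega
    have hd2 : (2*m+1+1)/2 = m+1 := by omega
    rw [hd1, hd2]
    omega

lemma set0_lb (n : ℕ) : ∀ k ∈ {k | ∃ i, F0 (i+n) = F0 i + k},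
    m2x (n/2) + m2x ((n+1)/2) ≤ k := by
  rintro k ⟨i, hi⟩
  rcases Nat.even_or_odd' i with ⟨a, rfl | rfl⟩ <;> rcases Nat.even_or_odd' n with ⟨m, rfl | rfl⟩
  · have h1 : 2*a + 2*m = 2*(a+m) := by ring
    rw [h1, F0_even, F0_even] at hi
    have := m2x_spec a m
    have hd : 2*m/2 = m := by omega
    have hd2 : (2*m+1)/2 = m := by omega
    rw [hd, hd2]
    omega
  · have h1 : 2*a + (2*m+1) = 2*(a+m)+1 := by ring
    rw [h1, F0_odd, F0_even] at hi
    have b1 := m2x_spec a m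
    have b2 := m2x_spec a (m+1)
    have hs : Gc (a+(m+1)) = Gc (a+m) + pd (a+m) := by
      have h : a+(m+1) = (a+m)+1 := by ring
      rw [h, Gc_succ]
    have hd1 : (2*m+1)/2 = m := by omega
    have hd2 : (2*m+1+1)/2 = m+1 := by omega
    rw [hd1, hd2]
    omega
  · have h1 : 2*a+1 + 2*m = 2*(a+m)+1 := by ring
    rw [h1, F0_odd, F0_odd] at hi
    have b1 := m2x_spec a m
    have b2 := m2x_spec (a+1) m
    have hs : Gc (a+1) = Gc a + pd a := Gc_succ a
    have hs2 : Gc (a+m+1) = Gc (a+m) + pd (a+m) := Gc_succ (a+m)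
    have hp1 := pd_le_one a
    have hp2 := pd_le_one (a+m)
    have hre : a+1+m = a+m+1 := by ring
    rw [hre] at b2
    have hd : 2*m/2 = m := by omega
    have hd2 : (2*m+1)/2 = m := by omega
    rw [hd, hd2]
    omega
  · have h1 : 2*a+1 + (2*m+1) = 2*(a+(m+1)) := by ring
    rw [h1, F0_even, F0_odd] at hi
    have b1 := m2x_spec a (m+1)
    have b2 := m2x_spec (a+1) m
    have hs : Gc (a+1) = Gc a + pd a := Gc_succ a
    have hp1 := pd_le_one a
    have hre : a+1+m = a+(m+1) := by ring
    rw [hre] at b2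
    have hd1 : (2*m+1)/2 = m := by omega
    have hd2 : (2*m+1+1)/2 = m+1 := by omega
    rw [hd1, hd2]
    omega

-- witnesses achieving the extremes
lemma set0_max_wit (n : ℕ) :
    M2x (n/2) + M2x ((n+1)/2) ∈ {k | ∃ i, F0 (i+n) = F0 i + k} := by
  rcases Nat.even_or_odd' n with ⟨m, rfl | rfl⟩
  · have hd : 2*m/2 = m := by omega
    have hd2 : (2*m+1)/2 = m := by omega
    rw [hd, hd2]
    obtain ⟨a, ha⟩ := M2x_wit m
    refine ⟨2*a, ?_⟩
    have h1 : 2*a + 2*m = 2*(a+m) := by ring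
    rw [h1, F0_even, F0_even, ha]
    ring
  · have hd1 : (2*m+1)/2 = m := by omega
    have hd2 : (2*m+1+1)/2 = m+1 := by omega
    rw [hd1, hd2]
    have hmono := M2x_mono_succ m
    have hstep := M2x_step m
    rcases Nat.lt_or_ge (M2x m) (M2x (m+1)) with hlt | hge
    · -- M2x (m+1) = M2x m + 1 : take witness for m+1
      obtain ⟨a, ha⟩ := M2x_wit (m+1)
      have hs : Gc (a+(m+1)) = Gc (a+m) + pd (a+m) := by
        have h : a+(m+1) = (a+m)+1 := by ring
        rw [h, Gc_succ]
      have hb := M2x_spec a m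
      have hp := pd_le_one (a+m)
      refine ⟨2*a, ?_⟩
      have h1 : 2*a + (2*m+1) = 2*(a+m)+1 := by ring
      rw [h1, F0_odd, F0_even]
      omega
    · -- M2x (m+1) = M2x m : take witness for m
      obtain ⟨a, ha⟩ := M2x_wit m
      have hs : Gc (a+(m+1)) = Gc (a+m) + pd (a+m) := by
        have h : a+(m+1) = (a+m)+1 := by ring
        rw [h, Gc_succ]
      have hb := M2x_spec a (m+1)
      refine ⟨2*a, ?_⟩
      have h1 : 2*a + (2*m+1) = 2*(a+m)+1 := by ring
      rw [h1, F0_odd, F0_even]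
      omega

lemma set0_min_wit (n : ℕ) :
    m2x (n/2) + m2x ((n+1)/2) ∈ {k | ∃ i, F0 (i+n) = F0 i + k} := by
  rcases Nat.even_or_odd' n with ⟨m, rfl | rfl⟩
  · have hd : 2*m/2 = m := by omega
    have hd2 : (2*m+1)/2 = m := by omega
    rw [hd, hd2]
    obtain ⟨a, ha⟩ := m2x_wit m
    refine ⟨2*a, ?_⟩
    have h1 : 2*a + 2*m = 2*(a+m) := by ring
    rw [h1, F0_even, F0_even, ha]
    ring
  · have hd1 : (2*m+1)/2 = m := by omega
    have hd2 : (2*m+1+1)/2 = m+1 := by omega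
    rw [hd1, hd2]
    have hmono := m2x_mono_succ m
    have hstep := m2x_step m
    rcases Nat.lt_or_ge (m2x m) (m2x (m+1)) with hlt | hge
    · -- m2x (m+1) = m2x m + 1 : witness for m
      obtain ⟨a, ha⟩ := m2x_wit m
      have hs : Gc (a+(m+1)) = Gc (a+m) + pd (a+m) := by
        have h : a+(m+1) = (a+m)+1 := by ring
        rw [h, Gc_succ]
      have hb := m2x_spec a (m+1)
      have hp := pd_le_one (a+m)
      refine ⟨2*a, ?_⟩
      have h1 : 2*a + (2*m+1) = 2*(a+m)+1 := by ring
      rw [h1, F0_odd, F0_even]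
      omega
    · -- m2x (m+1) = m2x m : witness for m+1
      obtain ⟨a, ha⟩ := m2x_wit (m+1)
      have hs : Gc (a+(m+1)) = Gc (a+m) + pd (a+m) := by
        have h : a+(m+1) = (a+m)+1 := by ring
        rw [h, Gc_succ]
      have hb := m2x_spec a m
      refine ⟨2*a, ?_⟩
      have h1 : 2*a + (2*m+1) = 2*(a+m)+1 := by ring
      rw [h1, F0_odd, F0_even]
      omega

lemma M0_eq (n : ℕ) : M0 n = M2x (n/2) + M2x ((n+1)/2) := by
  unfold M0
  rw [set0_eq]
  apply le_antisymm
  · apply csSup_le ⟨_, set0_max_wit n⟩ (set0_ub n)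
  · exact le_csSup ⟨_, set0_ub n⟩ (set0_max_wit n)

lemma m0_eq (n : ℕ) : m0 n = m2x (n/2) + m2x ((n+1)/2) := by
  unfold m0
  rw [set0_eq]
  apply le_antisymm
  · exact Nat.sInf_le (set0_min_wit n)
  · exact le_csInf ⟨_, set0_min_wit n⟩ (set0_lb n)

lemma pow2mod3 (k : ℕ) : 2^k % 3 = 1 ∨ 2^k % 3 = 2 := by
  induction k with
  | zero => left; rfl
  | succ n ih =>
    rw [pow_succ]
    omega

lemma e_id (K : ℕ) : 2^(K+1)/3 + 2^K/3 + 1 = 2^K := by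
  have h := pow2mod3 K
  have h2 : (2:ℕ)^(K+1) = 2 * 2^K := by rw [pow_succ]; ring
  omega

-- small values
lemma m2x_two : m2x 2 = 0 := by
  have h := mrec 2; norm_num at h; have := M2x_one; omega
lemma M2x_two : M2x 2 = 1 := by
  have h := Mrec 2; norm_num at h; have := m2x_one; omega
lemma m2x_three : m2x 3 = 0 := by
  have h := mrec 3; norm_num at h; have := M2x_one; omega
lemma M2x_three : M2x 3 = 2 := by
  have h := Mrec 3; norm_num at h; have := m2x_two; omega
lemma m2x_four : m2x 4 = 1 := by
  have h := mrec 4; norm_num at h; have := M2x_two; omega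
lemma M2x_four : M2x 4 = 2 := by
  have h := Mrec 4; norm_num at h; have := m2x_two; omega

lemma lemA : ∀ L, 1 ≤ L → ∀ h : ℕ, 2*h ≤ 2^L →
    m2x (2^L + h) = 2^L/3 + m2x h ∧ M2x (2^L + h) = 2^L/3 + 1 + M2x h := by
  intro L
  induction L with
  | zero => omega
  | succ K ih =>
    intro _ h hh
    rcases Nat.eq_or_lt_of_le (Nat.one_le_iff_ne_zero.mpr (by omega : K + 1 ≠ 0)) with hK | hK
    · -- K + 1 = 1, i.e. K = 0 : base case, h ≤ 1
      have hK0 : K = 0 := by omega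
      subst hK0
      norm_num at hh ⊢
      interval_cases h
      · constructor
        · rw [show (2:ℕ)+0 = 2 by rfl, m2x_two, m2x_zero]
        · rw [show (2:ℕ)+0 = 2 by rfl, M2x_two, M2x_zero]
      · constructor
        · rw [show (2:ℕ)+1 = 3 by rfl, m2x_three, m2x_one]
        · rw [show (2:ℕ)+1 = 3 by rfl, M2x_three, M2x_one]
    · -- K ≥ 1
      have hK1 : 1 ≤ K := by omega
      have hp : (2:ℕ)^(K+1) = 2 * 2^K := by rw [pow_succ]; ring
      have hpos : 1 ≤ (2:ℕ)^K := Nat.one_le_two_pow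
      have hev : (2:ℕ)^K = 2 * 2^(K-1) := by
        have hK' : K - 1 + 1 = K := by omega
        conv_lhs => rw [← hK']
        rw [pow_succ]; ring
      -- first claim
      have d1 : (2^(K+1) + h)/2 = 2^K + h/2 := by omega
      have d2 : (2^(K+1) + h + 1)/2 = 2^K + (h+1)/2 := by omega
      have e1 := mrec (2^(K+1) + h)
      rw [d1] at e1
      have e2 := Mrec (2^(K+1) + h)
      rw [d2] at e2
      have ih1 := ih hK1 (h/2) (by omega)
      have ih2 := ih hK1 ((h+1)/2) (by omega)
      have e3 := mrec h
      have e4 := Mrec h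
      have e5 := e_id K
      omega

lemma lemB : ∀ L, 2 ≤ L → ∀ j : ℕ, 4*j ≤ 2^L →
    m2x (2^L - j) + M2x j = 2^L/3 ∧ M2x (2^L - j) + m2x j = 2^L/3 + 1 := by
  intro L
  induction L with
  | zero => omega
  | succ K ih =>
    intro _ j hj
    rcases Nat.lt_or_ge K 2 with hK | hK
    · -- K + 1 = 2 (K ≤ 1, and K+1 ≥ 2 forces K = 1)
      have hK1 : K = 1 := by omega
      subst hK1
      norm_num at hj ⊢
      interval_cases j
      · rw [show (4:ℕ)-0 = 4 by rfl, m2x_four, M2x_four, m2x_zero, M2x_zero]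
        omega
      · rw [show (4:ℕ)-1 = 3 by rfl, m2x_three, M2x_three, m2x_one, M2x_one]
        omega
    · -- K ≥ 2
      have hp : (2:ℕ)^(K+1) = 2 * 2^K := by rw [pow_succ]; ring
      have hp4 : (4:ℕ) ∣ 2^K := by
        obtain ⟨t, ht⟩ : ∃ t, K = t + 2 := ⟨K - 2, by omega⟩
        exact ⟨2^t, by rw [ht, pow_add]; ring⟩
      obtain ⟨t4, ht4⟩ := hp4
      have hpos : 4 ≤ (2:ℕ)^K := by
        calc (4:ℕ) = 2^2 := rfl
        _ ≤ 2^K := Nat.pow_le_pow_right (by norm_num) hK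
      have d1 : (2^(K+1) - j)/2 = 2^K - (j+1)/2 := by omega
      have d2 : (2^(K+1) - j + 1)/2 = 2^K - j/2 := by omega
      have e1 := mrec (2^(K+1) - j)
      rw [d1] at e1
      have e2 := Mrec (2^(K+1) - j)
      rw [d2] at e2
      have ih1 := ih hK ((j+1)/2) (by omega)
      have ih2 := ih hK (j/2) (by omega)
      have e3 := mrec j
      have e4 := Mrec j
      have e5 := e_id K
      have hle1 := m2x_le_M2x (2^K - (j+1)/2)
      have hle2 := m2x_le_M2x ((j+1)/2)
      omega


theorem stmt5 (l r : ℕ) (hl : 2 ≤ l) (hr : r < 2 ^ l) :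
    (2 * r ≤ 2 ^ l →
      D0 (2 ^ l + r) = D0 r + 2 ∧ m0 (2 ^ l + r) % 2 = m0 r % 2) ∧
    (2 ^ l < 2 * r →
      D0 (2 ^ l + r) = D0 (2 ^ (l + 1) - r) ∧
      m0 (2 ^ l + r) % 2 = (m0 (2 ^ (l + 1) - r) + D0 (2 ^ (l + 1) - r)) % 2) := by
  obtain ⟨L, rfl⟩ : ∃ L, l = L + 1 := ⟨l - 1, by omega⟩
  have hL : 1 ≤ L := by omega
  have hp : (2:ℕ)^(L+1) = 2 * 2^L := by rw [pow_succ]; ring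
  have hp2 : (2:ℕ)^(L+1+1) = 4 * 2^L := by rw [pow_succ, pow_succ]; ring
  have hpos : 2 ≤ (2:ℕ)^L := by
    calc (2:ℕ) = 2^1 := rfl
    _ ≤ 2^L := Nat.pow_le_pow_right (by norm_num) hL
  have hev : (2:ℕ)^L = 2 * 2^(L-1) := by
    have hL' : L - 1 + 1 = L := by omega
    conv_lhs => rw [← hL']
    rw [pow_succ]; ring
  constructor
  · -- case 2r ≤ 2^(L+1)
    intro hcase
    have d1 : (2^(L+1) + r)/2 = 2^L + r/2 := by omega
    have d2 : (2^(L+1) + r + 1)/2 = 2^L + (r+1)/2 := by omega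
    have A1 := lemA L hL (r/2) (by omega)
    have A2 := lemA L hL ((r+1)/2) (by omega)
    have hm := m0_eq (2^(L+1) + r)
    have hM := M0_eq (2^(L+1) + r)
    rw [d1, d2] at hm hM
    have hmr := m0_eq r
    have hMr := M0_eq r
    have hle : m0 r ≤ M0 r := by
      rw [hmr, hMr]
      have := m2x_le_M2x (r/2); have := m2x_le_M2x ((r+1)/2); omega
    have hlen : m0 (2^(L+1)+r) ≤ M0 (2^(L+1)+r) := by
      rw [hm, hM]
      have := m2x_le_M2x (2^L + r/2); have := m2x_le_M2x (2^L + (r+1)/2); omega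
    unfold D0
    omega
  · -- case 2^(L+1) < 2r
    intro hcase
    set s := 2^(L+1) - r with hs
    have hs1 : 1 ≤ s := by omega
    have hs2 : 2*s + 2 ≤ 2^(L+1) := by omega
    -- n = 2^(L+1) + r = 2^(L+2) - s
    have hn : 2^(L+1) + r = 2^(L+1+1) - s := by omega
    have d1 : (2^(L+1+1) - s)/2 = 2^(L+1) - (s+1)/2 := by omega
    have d2 : (2^(L+1+1) - s + 1)/2 = 2^(L+1) - s/2 := by omega
    have B1 := lemB (L+1) (by omega) ((s+1)/2) (by omega)
    have B2 := lemB (L+1) (by omega) (s/2) (by omega)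
    have hm := m0_eq (2^(L+1+1) - s)
    have hM := M0_eq (2^(L+1+1) - s)
    rw [d1, d2] at hm hM
    -- u = 2^(L+1+1) - r = 2^(L+1) + s
    have hu : 2^(L+1+1) - r = 2^(L+1) + s := by omega
    have du1 : (2^(L+1) + s)/2 = 2^L + s/2 := by omega
    have du2 : (2^(L+1) + s + 1)/2 = 2^L + (s+1)/2 := by omega
    have A1 := lemA L hL (s/2) (by omega)
    have A2 := lemA L hL ((s+1)/2) (by omega)
    have hmu := m0_eq (2^(L+1) + s)
    have hMu := M0_eq (2^(L+1) + s)
    rw [du1, du2] at hmu hMu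
    have hms := m0_eq s
    have hMs := M0_eq s
    have e5 := e_id (L+1)
    have e6 := e_id L
    have l1 := m2x_le_M2x (s/2)
    have l2 := m2x_le_M2x ((s+1)/2)
    rw [hn, hu]
    unfold D0
    omega
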